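/- Let φ = (φ₋, φ₊) : (0,∞) → ℝ² be locally absolutely continuous with ‖φ‖²_ℋ < ∞. Then each component φ± extends to a continuous function on [0,∞) with φ±(0) = 0 and lim_{r→∞} φ±(r) = 0, and the supremum bound sup_{r>0} ( φ₋(r)² + φ₊(r)² ) ≤ ‖φ‖²_ℋ holds. -/

import Mathlib

open MeasureTheory

/-- `φ` is locally absolutely continuous on `(0,∞)`: it is the indefinite
integral of its derivative on compact subintervals of `(0,∞)`. -/
def LocAC (φ : ℝ → ℝ) : Prop :=
  ∀ a b : ℝ, 0 < a → a ≤ b →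
    IntervalIntegrable (deriv φ) MeasureTheory.volume a b ∧
    φ b - φ a = ∫ t in a..b, deriv φ t

/-- The squared ℋ-norm `‖φ‖²_ℋ = ∫₀^∞ (φ₋'² + φ₊'² + (φ₋² + φ₊²)/r²) r dr`. -/
noncomputable def Hnorm2 (φm φp : ℝ → ℝ) : ℝ :=
  ∫ r in Set.Ioi (0 : ℝ),
    (deriv φm r ^ 2 + deriv φp r ^ 2 + (φm r ^ 2 + φp r ^ 2) / r ^ 2) * r

namespace Stmt13Aux

open Set Filter Topology

/-- Fubini trick: `∫ u f = T²/2` where `u` is the primitive of `f`. -/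
lemma fubini_aux {f : ℝ → ℝ} {a b : ℝ} (hf : IntegrableOn f (Ioc a b)) :
    IntegrableOn (fun t => (∫ s in Ioc a t, f s) * f t) (Ioc a b) ∧
    ∫ t in Ioc a b, (∫ s in Ioc a t, f s) * f t = (∫ t in Ioc a b, f t) ^ 2 / 2 := by
  set μ := volume.restrict (Ioc a b) with hμ
  set F : ℝ → ℝ → ℝ := fun t s => if s ≤ t then f t * f s else 0 with hFdef
  have hS : MeasurableSet {p : ℝ × ℝ | p.2 ≤ p.1} :=
    measurableSet_le measurable_snd measurable_fst
  have hg : Integrable (fun p : ℝ × ℝ => f p.1 * f p.2) (μ.prod μ) := hf.mul_prod hf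
  have hF : Integrable (Function.uncurry F) (μ.prod μ) := by
    have : Function.uncurry F = ({p : ℝ × ℝ | p.2 ≤ p.1}).indicator
        (fun p => f p.1 * f p.2) := by
      funext p
      by_cases h : p.2 ≤ p.1 <;> simp [Function.uncurry, hFdef, h, Set.indicator_apply]
    rw [this]
    exact hg.indicator hS
  set T : ℝ := ∫ t in Ioc a b, f t with hT
  have keyA : ∀ᵐ t ∂μ, (∫ s, F t s ∂μ) = (∫ s in Ioc a t, f s) * f t := by
    filter_upwards [ae_restrict_mem measurableSet_Ioc] with t ht
    have h1 : (fun s => F t s) = fun s => (Iic t).indicator (fun s => f t * f s) s := by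
      funext s
      by_cases h : s ≤ t <;> simp [hFdef, h, Set.indicator_apply]
    rw [h1, integral_indicator measurableSet_Iic, hμ,
      Measure.restrict_restrict measurableSet_Iic]
    have h2 : Iic t ∩ Ioc a b = Ioc a t := by
      rw [Set.inter_comm, Set.Ioc_inter_Iic, min_eq_right ht.2]
    rw [h2, integral_const_mul, mul_comm]
  have keyB : ∀ᵐ s ∂μ, (∫ t, F t s ∂μ) = f s * (T - ∫ u in Ioc a s, f u) := by
    filter_upwards [ae_restrict_mem measurableSet_Ioc] with s hs
    have h1 : (fun t => F t s) = fun t => (Ici s).indicator (fun t => f t * f s) t := by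
      funext t
      by_cases h : s ≤ t <;> simp [hFdef, h, Set.indicator_apply]
    rw [h1, integral_indicator measurableSet_Ici, hμ,
      Measure.restrict_restrict measurableSet_Ici]
    have h2 : Ici s ∩ Ioc a b = Icc s b := by
      ext x
      simp only [mem_inter_iff, mem_Ici, mem_Ioc, mem_Icc]
      exact ⟨fun h => ⟨h.1, h.2.2⟩, fun h => ⟨h.1, hs.1.trans_le h.1, h.2⟩⟩
    have hsplit : T = (∫ u in Ioc a s, f u) + ∫ u in Ioc s b, f u := by
      rw [hT, ← Set.Ioc_union_Ioc_eq_Ioc hs.1.le hs.2,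
        setIntegral_union (Set.Ioc_disjoint_Ioc_of_le le_rfl) measurableSet_Ioc
          (hf.mono_set (Set.Ioc_subset_Ioc_right hs.2))
          (hf.mono_set (Set.Ioc_subset_Ioc_left hs.1.le))]
    rw [h2, integral_Icc_eq_integral_Ioc, integral_mul_const]
    rw [hsplit]; ring
  have hI1 : Integrable (fun t => (∫ s in Ioc a t, f s) * f t) μ :=
    (hF.integral_prod_left).congr keyA
  have hI2 : Integrable (fun s => f s * (T - ∫ u in Ioc a s, f u)) μ :=
    (hF.integral_prod_right).congr keyB
  have hswap : (∫ t, ∫ s, F t s ∂μ ∂μ) = ∫ s, ∫ t, F t s ∂μ ∂μ :=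
    integral_integral_swap hF
  have hJ1 : (∫ t in Ioc a b, (∫ s in Ioc a t, f s) * f t) = ∫ t, ∫ s, F t s ∂μ ∂μ :=
    (integral_congr_ae keyA).symm
  have hJ2 : (∫ s, ∫ t, F t s ∂μ ∂μ) = ∫ s, f s * (T - ∫ u in Ioc a s, f u) ∂μ :=
    integral_congr_ae keyB
  refine ⟨hI1, ?_⟩
  have hsum : (∫ t in Ioc a b, (∫ s in Ioc a t, f s) * f t) +
      (∫ t in Ioc a b, (∫ s in Ioc a t, f s) * f t) = T * T := by
    nth_rewrite 2 [hJ1]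
    rw [hswap, hJ2, ← integral_add hI1 hI2]
    have : (fun t => (∫ s in Ioc a t, f s) * f t +
        f t * (T - ∫ u in Ioc a t, f u)) = fun t => T * f t := by
      funext t; ring
    rw [this, integral_const_mul]
  linarith [hsum]

/-- FTC for the square of a locally AC function. -/
lemma sq_diff {φ : ℝ → ℝ} (h : LocAC φ) {a b : ℝ} (ha : 0 < a) (hab : a ≤ b) :
    IntegrableOn (fun t => 2 * φ t * deriv φ t) (Ioc a b) ∧
    φ b ^ 2 - φ a ^ 2 = ∫ t in Ioc a b, 2 * φ t * deriv φ t := by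
  set f := deriv φ with hfd
  have hf : IntegrableOn f (Ioc a b) := by
    have := (h a b ha hab).1
    rwa [intervalIntegrable_iff_integrableOn_Ioc_of_le hab] at this
  obtain ⟨hfub_int, hfub⟩ := fubini_aux hf
  set T : ℝ := ∫ t in Ioc a b, f t with hT
  have hTb : φ b - φ a = T := by
    rw [hT, ← intervalIntegral.integral_of_le hab]; exact (h a b ha hab).2
  have hae : (fun t => 2 * φ t * f t) =ᵐ[volume.restrict (Ioc a b)]
      (fun t => 2 * φ a * f t + 2 * ((∫ s in Ioc a t, f s) * f t)) := by
    filter_upwards [ae_restrict_mem measurableSet_Ioc] with t ht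
    have h1 : φ t - φ a = ∫ s in Ioc a t, f s := by
      rw [← intervalIntegral.integral_of_le ht.1.le]; exact (h a t ha ht.1.le).2
    have h2 : φ t = φ a + ∫ s in Ioc a t, f s := by linarith
    rw [h2]; ring
  have h1 : Integrable (fun t => 2 * φ a * f t) (volume.restrict (Ioc a b)) :=
    hf.const_mul _
  have h2 : Integrable (fun t => 2 * ((∫ s in Ioc a t, f s) * f t))
      (volume.restrict (Ioc a b)) := hfub_int.const_mul _
  constructor
  · exact (h1.add h2).congr hae.symm
  · rw [integral_congr_ae hae, integral_add h1 h2, integral_const_mul,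
      integral_const_mul, hfub, ← hT]
    have h3 : T = φ b - φ a := hTb.symm
    rw [h3]; ring

lemma split_int {G : ℝ → ℝ} (hG : IntegrableOn G (Ioi 0)) {c : ℝ} (hc : 0 ≤ c) :
    ∫ r in Ioi (0:ℝ), G r = (∫ r in Ioc 0 c, G r) + ∫ r in Ioi c, G r := by
  rw [← Set.Ioc_union_Ioi_eq_Ioi hc,
    setIntegral_union Set.Ioc_disjoint_Ioi_same measurableSet_Ioi
      (hG.mono_set Ioc_subset_Ioi_self) (hG.mono_set (Ioi_subset_Ioi hc))]

lemma tail_top {G : ℝ → ℝ} (hG : IntegrableOn G (Ioi 0)) :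
    Tendsto (fun n : ℕ => ∫ r in Ioi (n : ℝ), G r) atTop (𝓝 0) := by
  have hU : ⋃ n : ℕ, Ioc (0:ℝ) (n:ℝ) = Ioi 0 := by
    ext x; simp only [mem_iUnion, mem_Ioc, mem_Ioi]
    exact ⟨fun ⟨n, h1, _⟩ => h1, fun hx => (exists_nat_ge x).imp fun n hn => ⟨hx, hn⟩⟩
  have hmono : Monotone (fun n : ℕ => Ioc (0:ℝ) (n:ℝ)) := fun m n hmn =>
    Ioc_subset_Ioc_right (Nat.cast_le.mpr hmn)
  have ht := tendsto_setIntegral_of_monotone (fun _ => measurableSet_Ioc) hmono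
    (by rw [hU]; exact hG)
  rw [hU] at ht
  have heq : (fun n : ℕ => ∫ r in Ioi (n:ℝ), G r) =
      fun n : ℕ => (∫ r in Ioi (0:ℝ), G r) - ∫ r in Ioc 0 (n:ℝ), G r := by
    funext n
    have := split_int hG (Nat.cast_nonneg n)
    linarith
  rw [heq]
  simpa using ht.const_sub (∫ r in Ioi (0:ℝ), G r)

lemma tail_zero {G : ℝ → ℝ} (hG : IntegrableOn G (Ioi 0)) :
    Tendsto (fun n : ℕ => ∫ r in Ioc (0:ℝ) (1/(n+1 : ℝ)), G r) atTop (𝓝 0) := by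
  have hU : ⋃ n : ℕ, Ioi (1/(n+1 : ℝ)) = Ioi 0 := by
    ext x; simp only [mem_iUnion, mem_Ioi]
    constructor
    · rintro ⟨n, h1⟩
      exact lt_trans (by positivity) h1
    · intro hx
      obtain ⟨n, hn⟩ := exists_nat_one_div_lt hx
      exact ⟨n, hn⟩
  have hmono : Monotone (fun n : ℕ => Ioi (1/(n+1 : ℝ))) := by
    intro m n hmn
    apply Ioi_subset_Ioi
    apply one_div_le_one_div_of_le (by positivity)
    have : (m:ℝ) ≤ n := Nat.cast_le.mpr hmn
    linarith
  have ht := tendsto_setIntegral_of_monotone (fun _ => measurableSet_Ioi) hmono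
    (by rw [hU]; exact hG)
  rw [hU] at ht
  have heq : (fun n : ℕ => ∫ r in Ioc (0:ℝ) (1/(n+1:ℝ)), G r) =
      fun n : ℕ => (∫ r in Ioi (0:ℝ), G r) - ∫ r in Ioi (1/(n+1:ℝ)), G r := by
    funext n
    have := split_int hG (by positivity : (0:ℝ) ≤ 1/(n+1:ℝ))
    linarith
  rw [heq]
  simpa using ht.const_sub (∫ r in Ioi (0:ℝ), G r)

lemma ptwise {x y u v r : ℝ} (hr : 0 < r) :
    |2 * x * u + 2 * y * v| ≤ (u ^ 2 + v ^ 2 + (x ^ 2 + y ^ 2) / r ^ 2) * r := by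
  have e : (u ^ 2 + v ^ 2 + (x ^ 2 + y ^ 2) / r ^ 2) * r
      = u ^ 2 * r + v ^ 2 * r + x ^ 2 / r + y ^ 2 / r := by
    field_simp; ring
  have e1 : (u * r - x) ^ 2 / r = u ^ 2 * r - 2 * x * u + x ^ 2 / r := by field_simp; ring
  have e2 : (u * r + x) ^ 2 / r = u ^ 2 * r + 2 * x * u + x ^ 2 / r := by field_simp; ring
  have e3 : (v * r - y) ^ 2 / r = v ^ 2 * r - 2 * y * v + y ^ 2 / r := by field_simp; ring
  have e4 : (v * r + y) ^ 2 / r = v ^ 2 * r + 2 * y * v + y ^ 2 / r := by field_simp; ring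
  have p1 : 0 ≤ (u * r - x) ^ 2 / r := by positivity
  have p2 : 0 ≤ (u * r + x) ^ 2 / r := by positivity
  have p3 : 0 ≤ (v * r - y) ^ 2 / r := by positivity
  have p4 : 0 ≤ (v * r + y) ^ 2 / r := by positivity
  rw [e, abs_le]
  constructor <;> nlinarith [p1, p2, p3, p4, e1, e2, e3, e4]

lemma exists_small_zero {F G : ℝ → ℝ} (hG : IntegrableOn G (Ioi 0))
    (hFG : ∀ r, 0 < r → F r / r ≤ G r) (hFnn : ∀ r, 0 ≤ F r)
    {δ c : ℝ} (hδ : 0 < δ) (hc : 0 < c) : ∃ x ∈ Ioc (0:ℝ) c, F x < δ := by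
  by_contra h
  push_neg at h
  have hint : IntegrableOn (fun r => δ * r⁻¹) (Ioc 0 c) := by
    refine Integrable.mono (hG.mono_set Ioc_subset_Ioi_self)
      ((measurable_const.mul measurable_inv).aestronglyMeasurable) ?_
    filter_upwards [ae_restrict_mem measurableSet_Ioc] with r hr
    have hr0 : (0:ℝ) < r := hr.1
    have h1 : δ * r⁻¹ ≤ F r / r := by
      rw [div_eq_mul_inv]
      exact mul_le_mul_of_nonneg_right (h r hr) (inv_nonneg.mpr hr0.le)
    have h2 : F r / r ≤ G r := hFG r hr0
    have hGpos : 0 ≤ G r := le_trans (div_nonneg (hFnn r) hr0.le) h2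
    rw [Real.norm_eq_abs, Real.norm_eq_abs, abs_of_nonneg (by positivity),
      abs_of_nonneg hGpos]
    linarith
  have hinv : IntegrableOn (fun r : ℝ => r⁻¹) (Ioc 0 c) := by
    have h2 := hint.const_mul δ⁻¹
    have he : (fun r : ℝ => δ⁻¹ * (δ * r⁻¹)) = fun r : ℝ => r⁻¹ := by
      funext r; field_simp
    rwa [he] at h2
  have hII : IntervalIntegrable (fun r : ℝ => r⁻¹) volume 0 c :=
    (intervalIntegrable_iff_integrableOn_Ioc_of_le hc.le).mpr hinv
  rw [intervalIntegrable_inv_iff] at hII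
  rcases hII with h0 | h0
  · exact hc.ne h0
  · exact h0 left_mem_uIcc

lemma exists_small_top {F G : ℝ → ℝ} (hG : IntegrableOn G (Ioi 0))
    (hFG : ∀ r, 0 < r → F r / r ≤ G r) (hFnn : ∀ r, 0 ≤ F r)
    {δ M : ℝ} (hδ : 0 < δ) (hM : 0 ≤ M) : ∃ x ∈ Ioi M, F x < δ := by
  by_contra h
  push_neg at h
  have hint : IntegrableOn (fun r => δ * r⁻¹) (Ioi M) := by
    refine Integrable.mono (hG.mono_set (Ioi_subset_Ioi hM))
      ((measurable_const.mul measurable_inv).aestronglyMeasurable) ?_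
    filter_upwards [ae_restrict_mem measurableSet_Ioi] with r hr
    have hr0 : (0:ℝ) < r := lt_of_le_of_lt hM hr
    have h1 : δ * r⁻¹ ≤ F r / r := by
      rw [div_eq_mul_inv]
      exact mul_le_mul_of_nonneg_right (h r hr) (inv_nonneg.mpr hr0.le)
    have h2 : F r / r ≤ G r := hFG r hr0
    have hGpos : 0 ≤ G r := le_trans (div_nonneg (hFnn r) hr0.le) h2
    rw [Real.norm_eq_abs, Real.norm_eq_abs, abs_of_nonneg (by positivity),
      abs_of_nonneg hGpos]
    linarith
  have hinv : IntegrableOn (fun r : ℝ => r⁻¹) (Ioi M) := by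
    have h2 := hint.const_mul δ⁻¹
    have he : (fun r : ℝ => δ⁻¹ * (δ * r⁻¹)) = fun r : ℝ => r⁻¹ := by
      funext r; field_simp
    rwa [he] at h2
  exact not_IntegrableOn_Ioi_inv hinv

lemma comp_sqrt {F h : ℝ → ℝ} {l : Filter ℝ} (hF : Tendsto F l (𝓝 0))
    (hb : ∀ r, h r ^ 2 ≤ F r) : Tendsto h l (𝓝 0) := by
  have hs : Tendsto (fun r => Real.sqrt (F r)) l (𝓝 0) := by
    have := (Real.continuous_sqrt.tendsto 0).comp hF
    simpa [Function.comp_def] using this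
  have key : ∀ r, |h r| ≤ Real.sqrt (F r) := fun r => Real.abs_le_sqrt (hb r)
  refine tendsto_of_tendsto_of_tendsto_of_le_of_le
    (g := fun r => -Real.sqrt (F r)) (h := fun r => Real.sqrt (F r))
    (by simpa using hs.neg) hs ?_ ?_
  · exact fun r => (abs_le.mp (key r)).1
  · exact fun r => (abs_le.mp (key r)).2

/-- The weight function appearing in the `ℋ`-norm. -/
noncomputable def Gf (φm φp : ℝ → ℝ) : ℝ → ℝ := fun r =>
  (deriv φm r ^ 2 + deriv φp r ^ 2 + (φm r ^ 2 + φp r ^ 2) / r ^ 2) * r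

/-- The sum of squares of the two components. -/
noncomputable def Ff (φm φp : ℝ → ℝ) : ℝ → ℝ := fun r => φm r ^ 2 + φp r ^ 2

section Main

variable {φm φp : ℝ → ℝ}

lemma Ff_nn : ∀ r, 0 ≤ Ff φm φp r := fun r => by
  simp only [Ff]; positivity

lemma Gf_nn : ∀ r, 0 < r → 0 ≤ Gf φm φp r := fun r hr => by
  simp only [Gf]
  have h1 : 0 ≤ deriv φm r ^ 2 + deriv φp r ^ 2 + (φm r ^ 2 + φp r ^ 2) / r ^ 2 := by
    positivity
  exact mul_nonneg h1 hr.le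

lemma Ff_div_le : ∀ r, 0 < r → Ff φm φp r / r ≤ Gf φm φp r := by
  intro r hr
  simp only [Ff, Gf]
  have h1 : (φm r ^ 2 + φp r ^ 2) / r = (φm r ^ 2 + φp r ^ 2) / r ^ 2 * r := by
    field_simp
  rw [h1]
  refine mul_le_mul_of_nonneg_right ?_ hr.le
  nlinarith [sq_nonneg (deriv φm r), sq_nonneg (deriv φp r)]

lemma int_mono {G : ℝ → ℝ} (hG : IntegrableOn G (Ioi 0))
    (hnn : ∀ r, 0 < r → 0 ≤ G r) {s : Set ℝ} (hs : s ⊆ Ioi 0) :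
    ∫ r in s, G r ≤ ∫ r in Ioi (0:ℝ), G r :=
  setIntegral_mono_set hG
    ((ae_restrict_mem measurableSet_Ioi).mono fun r hr => hnn r hr)
    (HasSubset.Subset.eventuallyLE hs)

lemma step_est (hm : LocAC φm) (hp : LocAC φp)
    (hfin : IntegrableOn (Gf φm φp) (Ioi 0)) {a b : ℝ} (ha : 0 < a) (hab : a ≤ b) :
    |Ff φm φp b - Ff φm φp a| ≤ ∫ r in Ioc a b, Gf φm φp r := by
  obtain ⟨him, hm2⟩ := sq_diff hm ha hab
  obtain ⟨hip, hp2⟩ := sq_diff hp ha hab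
  have hdiff : Ff φm φp b - Ff φm φp a =
      ∫ r in Ioc a b, (2 * φm r * deriv φm r + 2 * φp r * deriv φp r) := by
    rw [integral_add him hip]
    simp only [Ff]
    linarith
  rw [hdiff]
  calc |∫ r in Ioc a b, (2 * φm r * deriv φm r + 2 * φp r * deriv φp r)|
      ≤ ∫ r in Ioc a b, |2 * φm r * deriv φm r + 2 * φp r * deriv φp r| := by
        simpa [Real.norm_eq_abs] using
          norm_integral_le_integral_norm (μ := volume.restrict (Ioc a b))
            (fun r => 2 * φm r * deriv φm r + 2 * φp r * deriv φp r)
    _ ≤ ∫ r in Ioc a b, Gf φm φp r := by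
        refine setIntegral_mono_on (him.add hip).abs
          (hfin.mono_set fun x hx => ha.trans hx.1) measurableSet_Ioc ?_
        intro r hr
        have hr0 : (0:ℝ) < r := ha.trans hr.1
        simpa [Gf] using ptwise (x := φm r) (y := φp r)
          (u := deriv φm r) (v := deriv φp r) hr0

lemma F_tendsto_zero (hm : LocAC φm) (hp : LocAC φp)
    (hfin : IntegrableOn (Gf φm φp) (Ioi 0)) :
    Tendsto (Ff φm φp) (𝓝[>] (0:ℝ)) (𝓝 0) := by
  rw [Metric.tendsto_nhdsWithin_nhds]
  intro ε hε
  obtain ⟨n, hn⟩ := ((tail_zero hfin).eventually_lt_const (half_pos hε)).exists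
  have hc : (0:ℝ) < 1/(n+1:ℝ) := by positivity
  obtain ⟨x₀, hx₀m, hx₀⟩ := exists_small_zero hfin Ff_div_le Ff_nn (half_pos hε) hc
  refine ⟨x₀, hx₀m.1, ?_⟩
  intro x hx hd
  have hx0 : (0:ℝ) < x := hx
  have hxx0 : x < x₀ := by rwa [Real.dist_eq, sub_zero, abs_of_pos hx0] at hd
  have h1 := step_est hm hp hfin hx0 hxx0.le
  have h2 : ∫ r in Ioc x x₀, Gf φm φp r ≤ ∫ r in Ioc (0:ℝ) (1/(n+1:ℝ)), Gf φm φp r := by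
    refine setIntegral_mono_set (hfin.mono_set Ioc_subset_Ioi_self)
      ((ae_restrict_mem measurableSet_Ioc).mono fun r hr => Gf_nn r hr.1) ?_
    exact HasSubset.Subset.eventuallyLE (Ioc_subset_Ioc hx0.le hx₀m.2)
  rw [Real.dist_eq, sub_zero, abs_of_nonneg (Ff_nn x)]
  have h3 := (abs_le.mp h1).1
  linarith

lemma F_tendsto_top (hm : LocAC φm) (hp : LocAC φp)
    (hfin : IntegrableOn (Gf φm φp) (Ioi 0)) :
    Tendsto (Ff φm φp) atTop (𝓝 0) := by
  rw [Metric.tendsto_atTop]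
  intro ε hε
  obtain ⟨n, hn⟩ := ((tail_top hfin).eventually_lt_const (half_pos hε)).exists
  obtain ⟨x₀, hx₀m, hx₀⟩ := exists_small_top hfin Ff_div_le Ff_nn (half_pos hε)
    (Nat.cast_nonneg n)
  refine ⟨x₀, fun x hx => ?_⟩
  have hx₀0 : (0:ℝ) < x₀ := lt_of_le_of_lt (Nat.cast_nonneg n) hx₀m
  have h1 := step_est hm hp hfin hx₀0 hx
  have h2 : ∫ r in Ioc x₀ x, Gf φm φp r ≤ ∫ r in Ioi (n:ℝ), Gf φm φp r := by
    refine setIntegral_mono_set (hfin.mono_set (Ioi_subset_Ioi (Nat.cast_nonneg n)))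
      ((ae_restrict_mem measurableSet_Ioi).mono fun r hr =>
        Gf_nn r (lt_of_le_of_lt (Nat.cast_nonneg n) hr)) ?_
    exact HasSubset.Subset.eventuallyLE (fun y hy => hx₀m.trans hy.1)
  rw [Real.dist_eq, sub_zero, abs_of_nonneg (Ff_nn x)]
  have h3 := (le_abs_self (Ff φm φp x - Ff φm φp x₀)).trans h1
  linarith

lemma contOn {φ : ℝ → ℝ} (h : LocAC φ) : ContinuousOn φ (Ioi 0) := by
  intro r₀ hr₀
  have hr : (0:ℝ) < r₀ := hr₀
  have ha : (0:ℝ) < r₀/2 := by linarith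
  have hab : r₀/2 ≤ r₀ + 1 := by linarith
  have hint := (h (r₀/2) (r₀+1) ha hab).1
  have hcont := intervalIntegral.continuousOn_primitive_interval' hint left_mem_uIcc
  have huIcc : uIcc (r₀/2) (r₀+1) = Icc (r₀/2) (r₀+1) := uIcc_of_le hab
  have hCA : ContinuousAt (fun b => φ (r₀/2) + ∫ x in (r₀/2)..b, deriv φ x) r₀ := by
    apply ContinuousOn.continuousAt (continuousOn_const.add hcont)
    rw [huIcc]
    exact Icc_mem_nhds (by linarith) (by linarith)
  apply ContinuousAt.continuousWithinAt
  apply hCA.congr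
  filter_upwards [Ioi_mem_nhds (show r₀/2 < r₀ by linarith)] with x hx
  have := (h (r₀/2) x ha (le_of_lt hx)).2
  linarith

end Main

end Stmt13Aux

open Stmt13Aux Set Filter Topology in
theorem stmt13 (φm φp : ℝ → ℝ) (hm : LocAC φm) (hp : LocAC φp)
    (hfin : IntegrableOn
      (fun r => (deriv φm r ^ 2 + deriv φp r ^ 2 + (φm r ^ 2 + φp r ^ 2) / r ^ 2) * r)
      (Set.Ioi 0)) :
    ContinuousOn φm (Set.Ioi 0) ∧ ContinuousOn φp (Set.Ioi 0) ∧
    Filter.Tendsto φm (nhdsWithin 0 (Set.Ioi 0)) (nhds 0) ∧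
    Filter.Tendsto φp (nhdsWithin 0 (Set.Ioi 0)) (nhds 0) ∧
    Filter.Tendsto φm Filter.atTop (nhds 0) ∧
    Filter.Tendsto φp Filter.atTop (nhds 0) ∧
    ∀ r > (0 : ℝ), φm r ^ 2 + φp r ^ 2 ≤ Hnorm2 φm φp := by
  have hfin' : IntegrableOn (Gf φm φp) (Ioi 0) := hfin
  have h0 := F_tendsto_zero hm hp hfin'
  have htop := F_tendsto_top hm hp hfin'
  have hbm : ∀ r, φm r ^ 2 ≤ Ff φm φp r := fun r => by
    simp only [Ff]; linarith [sq_nonneg (φp r)]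
  have hbp : ∀ r, φp r ^ 2 ≤ Ff φm φp r := fun r => by
    simp only [Ff]; linarith [sq_nonneg (φm r)]
  refine ⟨contOn hm, contOn hp, comp_sqrt h0 hbm, comp_sqrt h0 hbp,
    comp_sqrt htop hbm, comp_sqrt htop hbp, ?_⟩
  intro r hr
  have hev : ∀ᶠ a in 𝓝[>] (0:ℝ),
      Ff φm φp r - (∫ x in Ioi (0:ℝ), Gf φm φp x) ≤ Ff φm φp a := by
    filter_upwards [Ioc_mem_nhdsGT_of_mem (⟨le_refl (0:ℝ), hr⟩ : (0:ℝ) ∈ Ico 0 r)]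
      with a ha
    have h1 := step_est hm hp hfin' ha.1 ha.2
    have h2 := int_mono hfin' Gf_nn (fun y (hy : y ∈ Ioc a r) => ha.1.trans hy.1)
    have h3 := (le_abs_self (Ff φm φp r - Ff φm φp a)).trans h1
    linarith
  have hfinal := ge_of_tendsto h0 hev
  have hH : Hnorm2 φm φp = ∫ x in Ioi (0:ℝ), Gf φm φp x := rfl
  have hFr : φm r ^ 2 + φp r ^ 2 = Ff φm φp r := rfl
  rw [hH, hFr]
  linarith
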